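/- Let ẽ, d̃, f̃, ã, b̃, c̃ be the bijections of ℤ³ defined by ẽ(i,j,k) = (i+1,j,k), d̃(i,j,k) = (i,j+1,k), f̃(i,j,k) = (i,j,k−ij), ã(i,j,k) = (i,j,k−j), b̃(i,j,k) = (i,j,k+i), c̃(i,j,k) = (i,j,k+1). Then the group of bijections of ℤ³ generated by ẽ, d̃, f̃, ã, b̃, c̃ is isomorphic to N₄, via an isomorphism sending e ↦ ẽ, d ↦ d̃, f ↦ f̃, a ↦ ã, b ↦ b̃, c ↦ c̃. -/

import Mathlib

/-- A 4×4 integer matrix is lower unitriangular if it has `1`s on the diagonal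
and `0`s above the diagonal. -/
def IsUnitriLower (M : Matrix (Fin 4) (Fin 4) ℤ) : Prop :=
  (∀ i, M i i = 1) ∧ ∀ i j : Fin 4, i < j → M i j = 0

/-- `N₄`: the group of 4×4 lower triangular integer matrices with `1`s on the diagonal,
realized as a subgroup of the units of the matrix ring. -/
def N4 : Subgroup (Matrix (Fin 4) (Fin 4) ℤ)ˣ where
  carrier := {u | IsUnitriLower u.val}
  one_mem' := by
    refine ⟨fun i => ?_, fun i j hij => ?_⟩
    · simp [Matrix.one_apply_eq]
    · simp [Units.val_one, Matrix.one_apply_ne (ne_of_lt hij)]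
  mul_mem' := by
    rintro a b ⟨ha1, ha2⟩ ⟨hb1, hb2⟩
    refine ⟨fun i => ?_, fun i j hij => ?_⟩
    · have key : ∀ k : Fin 4, a.val i k * b.val k i = if k = i then 1 else 0 := by
        intro k
        rcases lt_trichotomy k i with h | h | h
        · rw [hb2 k i h, mul_zero, if_neg h.ne]
        · subst h
          rw [ha1, hb1, one_mul, if_pos rfl]
        · rw [ha2 i k h, zero_mul, if_neg h.ne']
      show (a.val * b.val) i i = 1
      rw [Matrix.mul_apply]
      simp [key]
    · show (a.val * b.val) i j = 0
      rw [Matrix.mul_apply]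
      refine Finset.sum_eq_zero fun k _ => ?_
      rcases lt_or_ge i k with h | h
      · rw [ha2 i k h, zero_mul]
      · rw [hb2 k j (lt_of_le_of_lt h hij), mul_zero]
  inv_mem' := by
    rintro x ⟨ha1, ha2⟩
    set A := x.val with hA
    set B := (x⁻¹).val with hB
    have hBA : B * A = 1 := by
      rw [hB, hA, ← Units.val_mul]
      simp
    have key : ∀ i j : Fin 4,
        B i 0 * A 0 j + B i 1 * A 1 j + B i 2 * A 2 j + B i 3 * A 3 j
          = if i = j then 1 else 0 := by
      intro i j
      have h : (B * A) i j = (1 : Matrix (Fin 4) (Fin 4) ℤ) i j := by rw [hBA]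
      rw [Matrix.mul_apply, Fin.sum_univ_four] at h
      rw [h, Matrix.one_apply]
    have b03 : B 0 3 = 0 := by
      have h := key 0 3
      rw [ha2 0 3 (by decide), ha2 1 3 (by decide), ha2 2 3 (by decide), ha1 3,
        if_neg (by decide)] at h
      simpa using h
    have b13 : B 1 3 = 0 := by
      have h := key 1 3
      rw [ha2 0 3 (by decide), ha2 1 3 (by decide), ha2 2 3 (by decide), ha1 3,
        if_neg (by decide)] at h
      simpa using h
    have b23 : B 2 3 = 0 := by
      have h := key 2 3
      rw [ha2 0 3 (by decide), ha2 1 3 (by decide), ha2 2 3 (by decide), ha1 3,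
        if_neg (by decide)] at h
      simpa using h
    have b33 : B 3 3 = 1 := by
      have h := key 3 3
      rw [ha2 0 3 (by decide), ha2 1 3 (by decide), ha2 2 3 (by decide), ha1 3,
        if_pos rfl] at h
      simpa using h
    have b02 : B 0 2 = 0 := by
      have h := key 0 2
      rw [ha2 0 2 (by decide), ha2 1 2 (by decide), ha1 2, b03, if_neg (by decide)] at h
      simpa using h
    have b12 : B 1 2 = 0 := by
      have h := key 1 2
      rw [ha2 0 2 (by decide), ha2 1 2 (by decide), ha1 2, b13, if_neg (by decide)] at h
      simpa using h
    have b22 : B 2 2 = 1 := by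
      have h := key 2 2
      rw [ha2 0 2 (by decide), ha2 1 2 (by decide), ha1 2, b23, if_pos rfl] at h
      simpa using h
    have b01 : B 0 1 = 0 := by
      have h := key 0 1
      rw [ha2 0 1 (by decide), ha1 1, b02, b03, if_neg (by decide)] at h
      simpa using h
    have b11 : B 1 1 = 1 := by
      have h := key 1 1
      rw [ha2 0 1 (by decide), ha1 1, b12, b13, if_pos rfl] at h
      simpa using h
    have b00 : B 0 0 = 1 := by
      have h := key 0 0
      rw [ha1 0, b01, b02, b03, if_pos rfl] at h
      simpa using h
    refine ⟨fun i => ?_, fun i j hij => ?_⟩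
    · fin_cases i
      · exact b00
      · exact b11
      · exact b22
      · exact b33
    · fin_cases i <;> fin_cases j <;>
        first
          | exact absurd hij (by decide)
          | exact b01
          | exact b02
          | exact b03
          | exact b12
          | exact b13
          | exact b23

/-- Helper to build elements of `N4` from a matrix, an explicit inverse, and proofs. -/
def mkN4 (M N : Matrix (Fin 4) (Fin 4) ℤ) (h1 : M * N = 1) (h2 : N * M = 1)
    (h : IsUnitriLower M) : N4 :=
  ⟨⟨M, N, h1, h2⟩, h⟩

/-- The generator `e` of `N₄`: entry `1` in position (2,1). -/
def e4 : N4 :=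
  mkN4 !![1,0,0,0; 1,1,0,0; 0,0,1,0; 0,0,0,1] !![1,0,0,0; -1,1,0,0; 0,0,1,0; 0,0,0,1]
    (by decide) (by decide) (by constructor <;> simp [Fin.forall_fin_succ])

/-- The generator `f` of `N₄`: entry `1` in position (3,2). -/
def f4 : N4 :=
  mkN4 !![1,0,0,0; 0,1,0,0; 0,1,1,0; 0,0,0,1] !![1,0,0,0; 0,1,0,0; 0,-1,1,0; 0,0,0,1]
    (by decide) (by decide) (by constructor <;> simp [Fin.forall_fin_succ])

/-- The generator `d` of `N₄`: entry `1` in position (4,3). -/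
def d4 : N4 :=
  mkN4 !![1,0,0,0; 0,1,0,0; 0,0,1,0; 0,0,1,1] !![1,0,0,0; 0,1,0,0; 0,0,1,0; 0,0,-1,1]
    (by decide) (by decide) (by constructor <;> simp [Fin.forall_fin_succ])

/-- The generator `a` of `N₄`: entry `1` in position (3,1). -/
def a4 : N4 :=
  mkN4 !![1,0,0,0; 0,1,0,0; 1,0,1,0; 0,0,0,1] !![1,0,0,0; 0,1,0,0; -1,0,1,0; 0,0,0,1]
    (by decide) (by decide) (by constructor <;> simp [Fin.forall_fin_succ])

/-- The generator `b` of `N₄`: entry `1` in position (4,2). -/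
def b4 : N4 :=
  mkN4 !![1,0,0,0; 0,1,0,0; 0,0,1,0; 0,1,0,1] !![1,0,0,0; 0,1,0,0; 0,0,1,0; 0,-1,0,1]
    (by decide) (by decide) (by constructor <;> simp [Fin.forall_fin_succ])

/-- The generator `c` of `N₄`: entry `1` in position (4,1). -/
def c4 : N4 :=
  mkN4 !![1,0,0,0; 0,1,0,0; 0,0,1,0; 1,0,0,1] !![1,0,0,0; 0,1,0,0; 0,0,1,0; -1,0,0,1]
    (by decide) (by decide) (by constructor <;> simp [Fin.forall_fin_succ])

/-- `ẽ : (i,j,k) ↦ (i+1,j,k)`. -/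
def te : Equiv.Perm (ℤ × ℤ × ℤ) where
  toFun p := (p.1 + 1, p.2.1, p.2.2)
  invFun p := (p.1 - 1, p.2.1, p.2.2)
  left_inv := fun ⟨i, j, k⟩ => by simp
  right_inv := fun ⟨i, j, k⟩ => by simp

/-- `d̃ : (i,j,k) ↦ (i,j+1,k)`. -/
def td : Equiv.Perm (ℤ × ℤ × ℤ) where
  toFun p := (p.1, p.2.1 + 1, p.2.2)
  invFun p := (p.1, p.2.1 - 1, p.2.2)
  left_inv := fun ⟨i, j, k⟩ => by simp
  right_inv := fun ⟨i, j, k⟩ => by simp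

/-- `f̃ : (i,j,k) ↦ (i,j,k−ij)`. -/
def tf : Equiv.Perm (ℤ × ℤ × ℤ) where
  toFun p := (p.1, p.2.1, p.2.2 - p.1 * p.2.1)
  invFun p := (p.1, p.2.1, p.2.2 + p.1 * p.2.1)
  left_inv := fun ⟨i, j, k⟩ => by simp
  right_inv := fun ⟨i, j, k⟩ => by simp

/-- `ã : (i,j,k) ↦ (i,j,k−j)`. -/
def ta : Equiv.Perm (ℤ × ℤ × ℤ) where
  toFun p := (p.1, p.2.1, p.2.2 - p.2.1)
  invFun p := (p.1, p.2.1, p.2.2 + p.2.1)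
  left_inv := fun ⟨i, j, k⟩ => by simp
  right_inv := fun ⟨i, j, k⟩ => by simp

/-- `b̃ : (i,j,k) ↦ (i,j,k+i)`. -/
def tb : Equiv.Perm (ℤ × ℤ × ℤ) where
  toFun p := (p.1, p.2.1, p.2.2 + p.1)
  invFun p := (p.1, p.2.1, p.2.2 - p.1)
  left_inv := fun ⟨i, j, k⟩ => by simp
  right_inv := fun ⟨i, j, k⟩ => by simp

/-- `c̃ : (i,j,k) ↦ (i,j,k+1)`. -/
def tc : Equiv.Perm (ℤ × ℤ × ℤ) where
  toFun p := (p.1, p.2.1, p.2.2 + 1)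
  invFun p := (p.1, p.2.1, p.2.2 - 1)
  left_inv := fun ⟨i, j, k⟩ => by simp
  right_inv := fun ⟨i, j, k⟩ => by simp


/-- The affine-type permutation of `ℤ³` with parameters `(p, q, al, be, ga, r)`:
`(i,j,k) ↦ (i+p, j+q, k + r + al*i + be*j + ga*i*j)`. -/
def act (p q al be ga r : ℤ) : Equiv.Perm (ℤ × ℤ × ℤ) where
  toFun x := (x.1 + p, x.2.1 + q, x.2.2 + r + al * x.1 + be * x.2.1 + ga * x.1 * x.2.1)
  invFun x := (x.1 - p, x.2.1 - q,
    x.2.2 - r - al * (x.1 - p) - be * (x.2.1 - q) - ga * (x.1 - p) * (x.2.1 - q))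
  left_inv := fun ⟨i, j, k⟩ => by simp; ring
  right_inv := fun ⟨i, j, k⟩ => by simp; ring

lemma act_apply (p q al be ga r i j k : ℤ) :
    act p q al be ga r (i, j, k) = (i + p, j + q, k + r + al * i + be * j + ga * i * j) := rfl

lemma mul_entries (A B : Matrix (Fin 4) (Fin 4) ℤ)
    (hA : IsUnitriLower A) (hB : IsUnitriLower B) :
    (A * B) 1 0 = A 1 0 + B 1 0 ∧
    (A * B) 2 1 = A 2 1 + B 2 1 ∧
    (A * B) 3 2 = A 3 2 + B 3 2 ∧
    (A * B) 2 0 = A 2 0 + B 2 0 + A 2 1 * B 1 0 ∧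
    (A * B) 3 1 = A 3 1 + B 3 1 + A 3 2 * B 2 1 ∧
    (A * B) 3 0 = A 3 0 + B 3 0 + A 3 1 * B 1 0 + A 3 2 * B 2 0 := by
  obtain ⟨hA1, hA2⟩ := hA
  obtain ⟨hB1, hB2⟩ := hB
  refine ⟨?_, ?_, ?_, ?_, ?_, ?_⟩ <;>
    · rw [Matrix.mul_apply, Fin.sum_univ_four]
      simp only [hA1, hB1, hA2 0 1 (by decide), hA2 0 2 (by decide), hA2 0 3 (by decide),
        hA2 1 2 (by decide), hA2 1 3 (by decide), hA2 2 3 (by decide),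
        hB2 0 1 (by decide), hB2 0 2 (by decide), hB2 0 3 (by decide),
        hB2 1 2 (by decide), hB2 1 3 (by decide), hB2 2 3 (by decide)]
      ring

/-- The underlying map of the representation of `N₄` on `ℤ³`. -/
def phi0 (M : N4) : Equiv.Perm (ℤ × ℤ × ℤ) :=
  act (M.1.1 1 0) (M.1.1 3 2) (M.1.1 3 1 - M.1.1 3 2 * M.1.1 2 1)
    (-(M.1.1 2 0)) (-(M.1.1 2 1)) (M.1.1 3 0 - M.1.1 3 2 * M.1.1 2 0)

/-- The representation of `N₄` on `ℤ³`. -/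
def phi : N4 →* Equiv.Perm (ℤ × ℤ × ℤ) where
  toFun := phi0
  map_one' := by
    ext ⟨i, j, k⟩ <;> simp [phi0, act, Matrix.one_apply]
  map_mul' x y := by
    have hx := x.2
    have hy := y.2
    have hxy : ((x * y : N4) : (Matrix (Fin 4) (Fin 4) ℤ)ˣ).val = x.1.1 * y.1.1 := rfl
    obtain ⟨h1, h2, h3, h4, h5, h6⟩ := mul_entries x.1.1 y.1.1 hx hy
    ext ⟨i, j, k⟩ <;>
      · simp only [phi0, hxy, h1, h2, h3, h4, h5, h6, Equiv.Perm.coe_mul,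
          Function.comp_apply, act_apply]
        ring_nf


lemma phi_e4 : phi e4 = te := by
  ext ⟨i, j, k⟩ <;>
    · rw [show phi e4 = act 1 0 0 0 0 0 from rfl]
      simp only [act_apply, te, Equiv.coe_fn_mk]
      try ring

lemma phi_d4 : phi d4 = td := by
  ext ⟨i, j, k⟩ <;>
    · rw [show phi d4 = act 0 1 0 0 0 0 from rfl]
      simp only [act_apply, td, Equiv.coe_fn_mk]
      try ring

lemma phi_f4 : phi f4 = tf := by
  ext ⟨i, j, k⟩ <;>
    · rw [show phi f4 = act 0 0 0 0 (-1) 0 from rfl]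
      simp only [act_apply, tf, Equiv.coe_fn_mk]
      try ring

lemma phi_a4 : phi a4 = ta := by
  ext ⟨i, j, k⟩ <;>
    · rw [show phi a4 = act 0 0 0 (-1) 0 0 from rfl]
      simp only [act_apply, ta, Equiv.coe_fn_mk]
      try ring

lemma phi_b4 : phi b4 = tb := by
  ext ⟨i, j, k⟩ <;>
    · rw [show phi b4 = act 0 0 1 0 0 0 from rfl]
      simp only [act_apply, tb, Equiv.coe_fn_mk]
      try ring

lemma phi_c4 : phi c4 = tc := by
  ext ⟨i, j, k⟩ <;>
    · rw [show phi c4 = act 0 0 0 0 0 1 from rfl]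
      simp only [act_apply, tc, Equiv.coe_fn_mk]
      try ring

lemma phi_injective : Function.Injective phi := by
  intro x y h
  obtain ⟨hx1, hx2⟩ := x.2
  obtain ⟨hy1, hy2⟩ := y.2
  have hpt : ∀ i j k : ℤ, phi0 x (i, j, k) = phi0 y (i, j, k) := by
    intro i j k; rw [show phi0 x = phi x from rfl, h]; rfl
  have h000 := hpt 0 0 0
  have h100 := hpt 1 0 0
  have h010 := hpt 0 1 0
  have h110 := hpt 1 1 0
  simp only [phi0, act_apply, Prod.mk.injEq] at h000 h100 h010 h110
  obtain ⟨e1, e2, e3⟩ := h000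
  obtain ⟨-, -, e4'⟩ := h100
  obtain ⟨-, -, e5⟩ := h010
  obtain ⟨-, -, e6⟩ := h110
  have q10 : x.1.1 1 0 = y.1.1 1 0 := by linarith
  have q32 : x.1.1 3 2 = y.1.1 3 2 := by linarith
  have q21 : x.1.1 2 1 = y.1.1 2 1 := by linarith
  have q20 : x.1.1 2 0 = y.1.1 2 0 := by linarith
  have hA : x.1.1 3 1 - x.1.1 3 2 * x.1.1 2 1 = y.1.1 3 1 - y.1.1 3 2 * y.1.1 2 1 := by
    linarith [e4', e3]
  have q31 : x.1.1 3 1 = y.1.1 3 1 := by rw [q32, q21] at hA; linarith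
  have hB : x.1.1 3 0 - x.1.1 3 2 * x.1.1 2 0 = y.1.1 3 0 - y.1.1 3 2 * y.1.1 2 0 := by
    linarith [e3]
  have q30 : x.1.1 3 0 = y.1.1 3 0 := by rw [q32, q20] at hB; linarith
  have : x.1.1 = y.1.1 := by
    ext i j
    fin_cases i <;> fin_cases j
    · exact (hx1 0).trans (hy1 0).symm
    · exact (hx2 0 1 (by decide)).trans (hy2 0 1 (by decide)).symm
    · exact (hx2 0 2 (by decide)).trans (hy2 0 2 (by decide)).symm
    · exact (hx2 0 3 (by decide)).trans (hy2 0 3 (by decide)).symm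
    · exact q10
    · exact (hx1 1).trans (hy1 1).symm
    · exact (hx2 1 2 (by decide)).trans (hy2 1 2 (by decide)).symm
    · exact (hx2 1 3 (by decide)).trans (hy2 1 3 (by decide)).symm
    · exact q20
    · exact q21
    · exact (hx1 2).trans (hy1 2).symm
    · exact (hx2 2 3 (by decide)).trans (hy2 2 3 (by decide)).symm
    · exact q30
    · exact q31
    · exact q32
    · exact (hx1 3).trans (hy1 3).symm
  exact Subtype.ext (Units.ext this)


/-- Powers of a unipotent element `1 + E` with `E * E = 0`. -/
lemma unit_zpow (u : (Matrix (Fin 4) (Fin 4) ℤ)ˣ) (E : Matrix (Fin 4) (Fin 4) ℤ)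
    (hE : E * E = 0) (hu : (u : Matrix (Fin 4) (Fin 4) ℤ) = 1 + E) (n : ℤ) :
    ((u ^ n : (Matrix (Fin 4) (Fin 4) ℤ)ˣ) : Matrix (Fin 4) (Fin 4) ℤ) = 1 + n • E := by
  have hinv : ((u⁻¹ : (Matrix (Fin 4) (Fin 4) ℤ)ˣ) : Matrix (Fin 4) (Fin 4) ℤ) = 1 - E := by
    apply Units.inv_eq_of_mul_eq_one_right
    have expand : (1 + E) * (1 - E) = 1 - E * E := by noncomm_ring
    rw [hu, expand, hE, sub_zero]
  induction n using Int.induction_on with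
  | zero => simp
  | succ m ih =>
    rw [zpow_add_one, Units.val_mul, ih, hu]
    have expand : (1 + (m : ℤ) • E) * (1 + E) = 1 + E + (m : ℤ) • E + ((m : ℤ) • E) * E := by
      noncomm_ring
    rw [expand, smul_mul_assoc, hE, smul_zero, add_zero, add_smul, one_smul]
    abel
  | pred m ih =>
    rw [zpow_sub_one, Units.val_mul, ih, hinv]
    have expand : (1 + (-m : ℤ) • E) * (1 - E) =
        1 - E + (-m : ℤ) • E - ((-m : ℤ) • E) * E := by noncomm_ring
    rw [expand, smul_mul_assoc, hE, smul_zero, sub_zero, sub_smul, one_smul]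
    abel

lemma e4_zpow (n : ℤ) : (((e4 ^ n : N4) : (Matrix (Fin 4) (Fin 4) ℤ)ˣ) : Matrix (Fin 4) (Fin 4) ℤ)
    = !![1,0,0,0; n,1,0,0; 0,0,1,0; 0,0,0,1] := by
  rw [SubgroupClass.coe_zpow,
    unit_zpow _ !![0,0,0,0; 1,0,0,0; 0,0,0,0; 0,0,0,0] (by decide) (by decide) n]
  ext i j
  fin_cases i <;> fin_cases j <;> simp [Matrix.one_apply, Matrix.vecHead, Matrix.vecTail]

lemma f4_zpow (n : ℤ) : (((f4 ^ n : N4) : (Matrix (Fin 4) (Fin 4) ℤ)ˣ) : Matrix (Fin 4) (Fin 4) ℤ)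
    = !![1,0,0,0; 0,1,0,0; 0,n,1,0; 0,0,0,1] := by
  rw [SubgroupClass.coe_zpow,
    unit_zpow _ !![0,0,0,0; 0,0,0,0; 0,1,0,0; 0,0,0,0] (by decide) (by decide) n]
  ext i j
  fin_cases i <;> fin_cases j <;> simp [Matrix.one_apply, Matrix.vecHead, Matrix.vecTail]

lemma d4_zpow (n : ℤ) : (((d4 ^ n : N4) : (Matrix (Fin 4) (Fin 4) ℤ)ˣ) : Matrix (Fin 4) (Fin 4) ℤ)
    = !![1,0,0,0; 0,1,0,0; 0,0,1,0; 0,0,n,1] := by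
  rw [SubgroupClass.coe_zpow,
    unit_zpow _ !![0,0,0,0; 0,0,0,0; 0,0,0,0; 0,0,1,0] (by decide) (by decide) n]
  ext i j
  fin_cases i <;> fin_cases j <;> simp [Matrix.one_apply, Matrix.vecHead, Matrix.vecTail]

lemma a4_zpow (n : ℤ) : (((a4 ^ n : N4) : (Matrix (Fin 4) (Fin 4) ℤ)ˣ) : Matrix (Fin 4) (Fin 4) ℤ)
    = !![1,0,0,0; 0,1,0,0; n,0,1,0; 0,0,0,1] := by
  rw [SubgroupClass.coe_zpow,
    unit_zpow _ !![0,0,0,0; 0,0,0,0; 1,0,0,0; 0,0,0,0] (by decide) (by decide) n]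
  ext i j
  fin_cases i <;> fin_cases j <;> simp [Matrix.one_apply, Matrix.vecHead, Matrix.vecTail]

lemma b4_zpow (n : ℤ) : (((b4 ^ n : N4) : (Matrix (Fin 4) (Fin 4) ℤ)ˣ) : Matrix (Fin 4) (Fin 4) ℤ)
    = !![1,0,0,0; 0,1,0,0; 0,0,1,0; 0,n,0,1] := by
  rw [SubgroupClass.coe_zpow,
    unit_zpow _ !![0,0,0,0; 0,0,0,0; 0,0,0,0; 0,1,0,0] (by decide) (by decide) n]
  ext i j
  fin_cases i <;> fin_cases j <;> simp [Matrix.one_apply, Matrix.vecHead, Matrix.vecTail]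

lemma c4_zpow (n : ℤ) : (((c4 ^ n : N4) : (Matrix (Fin 4) (Fin 4) ℤ)ˣ) : Matrix (Fin 4) (Fin 4) ℤ)
    = !![1,0,0,0; 0,1,0,0; 0,0,1,0; n,0,0,1] := by
  rw [SubgroupClass.coe_zpow,
    unit_zpow _ !![0,0,0,0; 0,0,0,0; 0,0,0,0; 1,0,0,0] (by decide) (by decide) n]
  ext i j
  fin_cases i <;> fin_cases j <;> simp [Matrix.one_apply, Matrix.vecHead, Matrix.vecTail]

lemma prod_lit (u f a b c d : ℤ) :
    !![(1:ℤ),0,0,0; u,1,0,0; 0,0,1,0; 0,0,0,1] * !![1,0,0,0; 0,1,0,0; 0,f,1,0; 0,0,0,1] *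
      !![1,0,0,0; 0,1,0,0; a,0,1,0; 0,0,0,1] * !![1,0,0,0; 0,1,0,0; 0,0,1,0; 0,b,0,1] *
      !![1,0,0,0; 0,1,0,0; 0,0,1,0; c,0,0,1] * !![1,0,0,0; 0,1,0,0; 0,0,1,0; 0,0,d,1]
    = !![1,0,0,0; u,1,0,0; a,f,1,0; c,b,d,1] := by
  have s1 : !![(1:ℤ),0,0,0; u,1,0,0; 0,0,1,0; 0,0,0,1] * !![1,0,0,0; 0,1,0,0; 0,f,1,0; 0,0,0,1]
      = !![1,0,0,0; u,1,0,0; 0,f,1,0; 0,0,0,1] := by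
    ext i j
    fin_cases i <;> fin_cases j <;>
      simp [Matrix.mul_apply, Fin.sum_univ_four, Matrix.vecHead, Matrix.vecTail]
  have s2 : !![(1:ℤ),0,0,0; u,1,0,0; 0,f,1,0; 0,0,0,1] * !![1,0,0,0; 0,1,0,0; a,0,1,0; 0,0,0,1]
      = !![1,0,0,0; u,1,0,0; a,f,1,0; 0,0,0,1] := by
    ext i j
    fin_cases i <;> fin_cases j <;>
      simp [Matrix.mul_apply, Fin.sum_univ_four, Matrix.vecHead, Matrix.vecTail]
  have s3 : !![(1:ℤ),0,0,0; u,1,0,0; a,f,1,0; 0,0,0,1] * !![1,0,0,0; 0,1,0,0; 0,0,1,0; 0,b,0,1]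
      = !![1,0,0,0; u,1,0,0; a,f,1,0; 0,b,0,1] := by
    ext i j
    fin_cases i <;> fin_cases j <;>
      simp [Matrix.mul_apply, Fin.sum_univ_four, Matrix.vecHead, Matrix.vecTail]
  have s4 : !![(1:ℤ),0,0,0; u,1,0,0; a,f,1,0; 0,b,0,1] * !![1,0,0,0; 0,1,0,0; 0,0,1,0; c,0,0,1]
      = !![1,0,0,0; u,1,0,0; a,f,1,0; c,b,0,1] := by
    ext i j
    fin_cases i <;> fin_cases j <;>
      simp [Matrix.mul_apply, Fin.sum_univ_four, Matrix.vecHead, Matrix.vecTail]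
  have s5 : !![(1:ℤ),0,0,0; u,1,0,0; a,f,1,0; c,b,0,1] * !![1,0,0,0; 0,1,0,0; 0,0,1,0; 0,0,d,1]
      = !![1,0,0,0; u,1,0,0; a,f,1,0; c,b,d,1] := by
    ext i j
    fin_cases i <;> fin_cases j <;>
      simp [Matrix.mul_apply, Fin.sum_univ_four, Matrix.vecHead, Matrix.vecTail]
  rw [s1, s2, s3, s4, s5]

lemma closure_gens : Subgroup.closure ({e4, d4, f4, a4, b4, c4} : Set N4) = ⊤ := by
  rw [eq_top_iff]
  intro M _
  obtain ⟨h1, h2⟩ := M.2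
  have key : M = e4 ^ (M.1.1 1 0) * f4 ^ (M.1.1 2 1) * a4 ^ (M.1.1 2 0) *
      b4 ^ (M.1.1 3 1) * c4 ^ (M.1.1 3 0) * d4 ^ (M.1.1 3 2) := by
    apply Subtype.ext
    apply Units.ext
    have : (((e4 ^ (M.1.1 1 0) * f4 ^ (M.1.1 2 1) * a4 ^ (M.1.1 2 0) *
        b4 ^ (M.1.1 3 1) * c4 ^ (M.1.1 3 0) * d4 ^ (M.1.1 3 2) : N4) :
          (Matrix (Fin 4) (Fin 4) ℤ)ˣ) : Matrix (Fin 4) (Fin 4) ℤ)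
        = !![1,0,0,0; M.1.1 1 0,1,0,0; M.1.1 2 0,M.1.1 2 1,1,0;
            M.1.1 3 0,M.1.1 3 1,M.1.1 3 2,1] := by
      rw [show (((e4 ^ (M.1.1 1 0) * f4 ^ (M.1.1 2 1) * a4 ^ (M.1.1 2 0) *
            b4 ^ (M.1.1 3 1) * c4 ^ (M.1.1 3 0) * d4 ^ (M.1.1 3 2) : N4) :
              (Matrix (Fin 4) (Fin 4) ℤ)ˣ) : Matrix (Fin 4) (Fin 4) ℤ)
          = (((e4 ^ (M.1.1 1 0) : N4) : (Matrix (Fin 4) (Fin 4) ℤ)ˣ) : Matrix (Fin 4) (Fin 4) ℤ) *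
            (((f4 ^ (M.1.1 2 1) : N4) : (Matrix (Fin 4) (Fin 4) ℤ)ˣ) : Matrix (Fin 4) (Fin 4) ℤ) *
            (((a4 ^ (M.1.1 2 0) : N4) : (Matrix (Fin 4) (Fin 4) ℤ)ˣ) : Matrix (Fin 4) (Fin 4) ℤ) *
            (((b4 ^ (M.1.1 3 1) : N4) : (Matrix (Fin 4) (Fin 4) ℤ)ˣ) : Matrix (Fin 4) (Fin 4) ℤ) *
            (((c4 ^ (M.1.1 3 0) : N4) : (Matrix (Fin 4) (Fin 4) ℤ)ˣ) : Matrix (Fin 4) (Fin 4) ℤ) *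
            (((d4 ^ (M.1.1 3 2) : N4) : (Matrix (Fin 4) (Fin 4) ℤ)ˣ) : Matrix (Fin 4) (Fin 4) ℤ)
          from rfl]
      rw [e4_zpow, f4_zpow, a4_zpow, b4_zpow, c4_zpow, d4_zpow, prod_lit]
    rw [this]
    ext i j
    fin_cases i <;> fin_cases j <;>
      first
        | (exact (h1 _).trans (by simp))
        | (exact (h2 _ _ (by decide)).trans (by simp))
        | simp
  rw [key]
  have m1 : e4 ∈ Subgroup.closure ({e4, d4, f4, a4, b4, c4} : Set N4) :=
    Subgroup.subset_closure (by simp)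
  have m2 : d4 ∈ Subgroup.closure ({e4, d4, f4, a4, b4, c4} : Set N4) :=
    Subgroup.subset_closure (by simp)
  have m3 : f4 ∈ Subgroup.closure ({e4, d4, f4, a4, b4, c4} : Set N4) :=
    Subgroup.subset_closure (by simp)
  have m4 : a4 ∈ Subgroup.closure ({e4, d4, f4, a4, b4, c4} : Set N4) :=
    Subgroup.subset_closure (by simp)
  have m5 : b4 ∈ Subgroup.closure ({e4, d4, f4, a4, b4, c4} : Set N4) :=
    Subgroup.subset_closure (by simp)
  have m6 : c4 ∈ Subgroup.closure ({e4, d4, f4, a4, b4, c4} : Set N4) :=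
    Subgroup.subset_closure (by simp)
  exact mul_mem (mul_mem (mul_mem (mul_mem (mul_mem (zpow_mem m1 _) (zpow_mem m3 _))
    (zpow_mem m4 _)) (zpow_mem m5 _)) (zpow_mem m6 _)) (zpow_mem m2 _)

lemma phi_range : phi.range = Subgroup.closure {te, td, tf, ta, tb, tc} := by
  rw [MonoidHom.range_eq_map, ← closure_gens, MonoidHom.map_closure]
  congr 1
  simp only [Set.image_insert_eq, Set.image_singleton, phi_e4, phi_d4, phi_f4, phi_a4,
    phi_b4, phi_c4]


/-- **Proposition 1.3.** The group of bijections of `ℤ³` generated by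
`ẽ, d̃, f̃, ã, b̃, c̃` is isomorphic to `N₄`, via an isomorphism sending the standard
generators `e, d, f, a, b, c` of `N₄` to `ẽ, d̃, f̃, ã, b̃, c̃` respectively. -/
theorem N4_iso_perm_group_Z3 :
    ∃ ψ : N4 ≃* (Subgroup.closure {te, td, tf, ta, tb, tc} : Subgroup (Equiv.Perm (ℤ × ℤ × ℤ))),
      (ψ e4 : Equiv.Perm (ℤ × ℤ × ℤ)) = te ∧
      (ψ d4 : Equiv.Perm (ℤ × ℤ × ℤ)) = td ∧
      (ψ f4 : Equiv.Perm (ℤ × ℤ × ℤ)) = tf ∧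
      (ψ a4 : Equiv.Perm (ℤ × ℤ × ℤ)) = ta ∧
      (ψ b4 : Equiv.Perm (ℤ × ℤ × ℤ)) = tb ∧
      (ψ c4 : Equiv.Perm (ℤ × ℤ × ℤ)) = tc := by
  refine ⟨(MonoidHom.ofInjective phi_injective).trans (MulEquiv.subgroupCongr phi_range),
    ?_, ?_, ?_, ?_, ?_, ?_⟩ <;>
    simp [MulEquiv.trans_apply, MulEquiv.subgroupCongr_apply, MonoidHom.ofInjective_apply,
      phi_e4, phi_d4, phi_f4, phi_a4, phi_b4, phi_c4]
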